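/- Every strictly balanced triangle-free graph H₀ on h vertices with e edges is strictly α-balanced for every α > h/e; i.e., its unique proper clique cover 𝐂 (the edges) satisfies η₂(H₀,𝐂,S) > η₂(H₀,𝐂,V(H₀)) = h/(2e) + α/2 for all nonempty proper S ⊊ V(H₀). -/

import Mathlib

open Finset
open scoped Classical

/-- The exponent `η₂(H₀,𝐂,S)` for the edge clique cover `𝐂` of a graph `G`:
`(|S| + α|𝐂[S]|)/Σ𝐂[S]` if `α < |S|/(Σ𝐂[S] − |𝐂[S]|)` or `Σ𝐂[S] = |𝐂[S]|`, and
`(|S| + α|𝐂'[S]|)/Σ𝐂'[S]` otherwise. -/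
noncomputable def eta2 {V : Type*} [Fintype V] [DecidableEq V]
    (G : SimpleGraph V) [DecidableRel G.Adj] (α : ℝ) (S : Finset V) : ℝ :=
  let CS := G.edgeFinset.filter fun ed => ∃ v ∈ ed, v ∈ S
  let sCS : ℕ := ∑ ed ∈ CS, (S.filter fun v => v ∈ ed).card
  let C'S := G.edgeFinset.filter fun ed => ∀ v ∈ ed, v ∈ S
  if α < (S.card : ℝ) / ((sCS - CS.card : ℕ) : ℝ) ∨ sCS = CS.card then
    ((S.card : ℝ) + α * CS.card) / sCS
  else
    ((S.card : ℝ) + α * C'S.card) / (2 * C'S.card)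

lemma sym2_exists_mem {V : Type*} (ed : Sym2 V) : ∃ v, v ∈ ed := by
  induction ed using Sym2.ind with
  | _ x y => exact ⟨x, Sym2.mem_mk_left x y⟩

lemma filter_card_edge {V : Type*} [Fintype V] [DecidableEq V]
    (H₀ : SimpleGraph V) [DecidableRel H₀.Adj] (S : Finset V) (ed : Sym2 V)
    (hed : ed ∈ H₀.edgeFinset) :
    (S.filter fun v => v ∈ ed).card =
      if ∀ v ∈ ed, v ∈ S then 2 else if ∃ v ∈ ed, v ∈ S then 1 else 0 := by
  induction ed using Sym2.ind with
  | _ x y =>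
    rw [SimpleGraph.mem_edgeFinset, SimpleGraph.mem_edgeSet] at hed
    have hxy : x ≠ y := hed.ne
    have hfilter : (S.filter fun v => v ∈ s(x,y)) = S ∩ {x, y} := by
      ext v; simp [Sym2.mem_iff]
    rw [hfilter]
    by_cases hx : x ∈ S <;> by_cases hy : y ∈ S
    · have : S ∩ {x, y} = {x, y} := by
        apply Finset.inter_eq_right.mpr
        intro v hv; simp at hv; rcases hv with rfl | rfl <;> assumption
      simp [this, Sym2.mem_iff, hx, hy, Finset.card_insert_of_notMem, hxy]
    · have : S ∩ {x, y} = {x} := by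
        ext v; simp [Finset.mem_inter]; constructor
        · rintro ⟨hvS, rfl | rfl⟩; rfl; exact absurd hvS hy
        · rintro rfl; exact ⟨hx, Or.inl rfl⟩
      rw [this]
      rw [if_neg, if_pos]
      · simp
      · exact ⟨x, Sym2.mem_mk_left x y, hx⟩
      · intro hall; exact hy (hall y (Sym2.mem_mk_right x y))
    · have : S ∩ {x, y} = {y} := by
        ext v; simp [Finset.mem_inter]; constructor
        · rintro ⟨hvS, rfl | rfl⟩; exact absurd hvS hx; rfl
        · rintro rfl; exact ⟨hy, Or.inr rfl⟩
      rw [this]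
      rw [if_neg, if_pos]
      · simp
      · exact ⟨y, Sym2.mem_mk_right x y, hy⟩
      · intro hall; exact hx (hall x (Sym2.mem_mk_left x y))
    · have : S ∩ {x, y} = ∅ := by
        ext v; simp only [Finset.mem_inter, Finset.mem_insert, Finset.mem_singleton, Finset.notMem_empty, iff_false]
        rintro ⟨hvS, rfl | rfl⟩; exact hx hvS; exact hy hvS
      rw [this]
      rw [if_neg, if_neg]
      · simp
      · rintro ⟨v, hv, hvS⟩
        rw [Sym2.mem_iff] at hv
        rcases hv with rfl | rfl; exact hx hvS; exact hy hvS
      · intro hall; exact hx (hall x (Sym2.mem_mk_left x y))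


lemma hsum_lemma {V : Type*} [Fintype V] [DecidableEq V]
    (H₀ : SimpleGraph V) [DecidableRel H₀.Adj] (S : Finset V) :
    (∑ ed ∈ H₀.edgeFinset.filter fun ed => ∃ v ∈ ed, v ∈ S,
        (S.filter fun v => v ∈ ed).card) =
      (H₀.edgeFinset.filter fun ed => ∃ v ∈ ed, v ∈ S).card +
        (H₀.edgeFinset.filter fun ed => ∀ v ∈ ed, v ∈ S).card := by
  have step : ∀ ed ∈ H₀.edgeFinset.filter fun ed => ∃ v ∈ ed, v ∈ S,
      (S.filter fun v => v ∈ ed).card = 1 + (if ∀ v ∈ ed, v ∈ S then 1 else 0) := by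
    intro ed hed
    rw [Finset.mem_filter] at hed
    rw [filter_card_edge H₀ S ed hed.1]
    split_ifs with h1 h2
    · rfl
    · rfl
    · exact absurd hed.2 h2
  rw [Finset.sum_congr rfl step, Finset.sum_add_distrib, Finset.sum_const, smul_eq_mul,
    mul_one, ← Finset.sum_filter, Finset.sum_const, smul_eq_mul, mul_one]
  congr 1
  rw [Finset.filter_filter]
  congr 1
  apply Finset.filter_congr
  intro ed hed
  simp only [and_iff_right_iff_imp]
  intro hall
  obtain ⟨v, hv⟩ := sym2_exists_mem ed
  exact ⟨v, hv, hall v hv⟩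

/-- Every strictly balanced triangle-free graph `H₀` on `h` vertices with `e` edges is
strictly `α`-balanced for every `α > h/e`: its (unique proper) edge clique cover satisfies
`η₂(H₀,𝐂,S) > η₂(H₀,𝐂,V(H₀)) = h/(2e) + α/2` for all nonempty proper `S`. -/
theorem strictly_balanced_trianglefree_strictly_alpha_balanced
    {V : Type*} [Fintype V] [DecidableEq V]
    (H₀ : SimpleGraph V) [DecidableRel H₀.Adj]
    (h e : ℕ) (hh : Fintype.card V = h) (he : H₀.edgeFinset.card = e) (he1 : 1 ≤ e)
    (htf : H₀.CliqueFree 3)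
    (hbal : ∀ S : Finset V, S.Nonempty → S ≠ Finset.univ →
      ((H₀.edgeFinset.filter fun ed => ∀ v ∈ ed, v ∈ S).card : ℝ) / S.card <
        (e : ℝ) / h)
    (α : ℝ) (hα : (h : ℝ) / e < α) :
    eta2 H₀ α Finset.univ = (h : ℝ) / (2 * e) + α / 2 ∧
      ∀ S : Finset V, S.Nonempty → S ≠ Finset.univ →
        eta2 H₀ α S > eta2 H₀ α Finset.univ := by
  have he' : (0:ℝ) < e := by exact_mod_cast he1
  have hαe : (h:ℝ) < α * e := by
    rw [div_lt_iff₀ he'] at hα; exact hα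
  -- univ computations
  have hCSuniv : (H₀.edgeFinset.filter fun ed => ∃ v ∈ ed, v ∈ (Finset.univ : Finset V))
      = H₀.edgeFinset := by
    apply Finset.filter_true_of_mem
    intro ed _
    obtain ⟨v, hv⟩ := sym2_exists_mem ed
    exact ⟨v, hv, Finset.mem_univ v⟩
  have hC'univ : (H₀.edgeFinset.filter fun ed => ∀ v ∈ ed, v ∈ (Finset.univ : Finset V))
      = H₀.edgeFinset := by
    apply Finset.filter_true_of_mem
    intro ed _ v _
    exact Finset.mem_univ v
  have part1 : eta2 H₀ α Finset.univ = (h : ℝ) / (2 * e) + α / 2 := by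
    simp only [eta2]
    rw [hsum_lemma H₀ Finset.univ, hCSuniv, hC'univ, he, Finset.card_univ, hh]
    have hee : (e + e - e : ℕ) = e := by omega
    rw [hee, if_neg]
    · push_cast
      rw [div_add_div _ _ (by positivity : (2:ℝ)*(e:ℝ) ≠ 0) (by norm_num : (2:ℝ) ≠ 0)]
      rw [div_eq_div_iff (by positivity) (by positivity)]
      ring
    · push_neg
      exact ⟨by linarith, by omega⟩
  refine ⟨part1, ?_⟩
  intro S hS hSne
  rw [part1]
  have hh0 : 0 < h := by
    obtain ⟨x, _⟩ := hS
    have : Nonempty V := ⟨x⟩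
    rw [← hh]
    exact Fintype.card_pos
  have hh' : (0:ℝ) < h := by exact_mod_cast hh0
  have hs0 : 0 < S.card := Finset.card_pos.mpr hS
  have hs' : (0:ℝ) < S.card := by exact_mod_cast hs0
  -- strict balance
  have hbalS : ((H₀.edgeFinset.filter fun ed => ∀ v ∈ ed, v ∈ S).card : ℝ) * h
      < e * S.card := by
    have := hbal S hS hSne
    rwa [div_lt_div_iff₀ hs' hh'] at this
  -- CS nonempty
  have hCSne : (H₀.edgeFinset.filter fun ed => ∃ v ∈ ed, v ∈ S).Nonempty := by
    by_contra hemp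
    rw [Finset.not_nonempty_iff_eq_empty] at hemp
    set T : Finset V := Finset.univ \ S with hT
    have hT1 : T.Nonempty := by
      rw [Finset.sdiff_nonempty]
      intro hsub
      exact hSne (Finset.univ_subset_iff.mp hsub)
    have hT2 : T ≠ Finset.univ := by
      obtain ⟨x, hx⟩ := hS
      intro heq
      have : x ∈ T := heq ▸ Finset.mem_univ x
      rw [hT, Finset.mem_sdiff] at this
      exact this.2 hx
    have hfil : (H₀.edgeFinset.filter fun ed => ∀ v ∈ ed, v ∈ T) = H₀.edgeFinset := by
      apply Finset.filter_true_of_mem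
      intro ed hed v hv
      rw [hT, Finset.mem_sdiff]
      refine ⟨Finset.mem_univ v, fun hvS => ?_⟩
      have : ed ∈ H₀.edgeFinset.filter fun ed => ∃ v ∈ ed, v ∈ S :=
        Finset.mem_filter.mpr ⟨hed, v, hv, hvS⟩
      rw [hemp] at this
      exact absurd this (Finset.notMem_empty ed)
    have hTc := hbal T hT1 hT2
    rw [hfil, he] at hTc
    have hT0 : (0:ℝ) < T.card := by
      exact_mod_cast Finset.card_pos.mpr hT1
    rw [div_lt_div_iff₀ hT0 hh'] at hTc
    have hTle : (T.card : ℝ) ≤ h := by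
      exact_mod_cast hh ▸ Finset.card_le_univ T
    nlinarith
  -- abbreviations
  set a : ℕ := (H₀.edgeFinset.filter fun ed => ∀ v ∈ ed, v ∈ S).card with ha
  set b : ℕ := (H₀.edgeFinset.filter fun ed => ∃ v ∈ ed, v ∈ S).card with hb
  have hab : a ≤ b := by
    apply Finset.card_le_card
    intro ed hed
    rw [Finset.mem_filter] at hed ⊢
    obtain ⟨v, hv⟩ := sym2_exists_mem ed
    exact ⟨hed.1, v, hv, hed.2 v hv⟩
  have hb1 : 0 < b := Finset.card_pos.mpr hCSne
  have htarget : (h : ℝ) / (2 * e) + α / 2 = ((h:ℝ) + α * e) / (2 * e) := by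
    field_simp
  rw [htarget, gt_iff_lt]
  simp only [eta2]
  rw [hsum_lemma H₀ S, ← ha, ← hb]
  split_ifs with hc
  · rw [div_lt_div_iff₀ (by positivity) (by exact_mod_cast Nat.add_pos_left hb1 a)]
    push_cast
    nlinarith [mul_nonneg (sub_nonneg.mpr hαe.le) (sub_nonneg.mpr (by exact_mod_cast hab : (a:ℝ) ≤ b))]
  · push_neg at hc
    have ha1 : 0 < a := by
      rcases Nat.eq_zero_or_pos a with h0 | h0
      · exact absurd (by omega) hc.2
      · exact h0
    have ha' : (0:ℝ) < a := by exact_mod_cast ha1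
    rw [div_lt_div_iff₀ (by positivity) (by positivity)]
    nlinarith
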